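/- For every prime p and every integer a ≥ 1, μ*(p^a, p) = p^(a−1); that is, every linear automorphism x of a finite-dimensional vector space over 𝔽_p having order exactly p^a satisfies rank(x − id) ≥ p^(a−1), and there exist such a vector space and automorphism with rank(x − id) = p^(a−1). -/

import Mathlib

open Module

section RankLemma

variable {K V : Type} [Field K] [AddCommGroup V] [Module K V]

/-- If an invariant submodule is mapped onto itself by a nilpotent map, it is trivial. -/
lemma map_self_eq_bot (N : V →ₗ[K] V) (m : ℕ) (hm : N ^ m = 0)
    {W : Submodule K V} (hW : W.map N = W) : W = ⊥ := by
  have h : ∀ j, W.map (N ^ j) = W := by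
    intro j
    induction j with
    | zero => rw [pow_zero, Module.End.one_eq_id]; exact Submodule.map_id W
    | succ j ih =>
      rw [pow_succ', Module.End.mul_eq_comp, Submodule.map_comp, ih, hW]
  have := h m
  rw [hm] at this
  simpa [Submodule.map_zero] using this.symm

lemma rank_ge_of_pow_ne_zero [FiniteDimensional K V] (N : V →ₗ[K] V) (m k : ℕ)
    (hm : N ^ m = 0) (hk : N ^ k ≠ 0) :
    k ≤ finrank K (LinearMap.range N) := by
  have hne : ∀ i, i ≤ k → N ^ i ≠ 0 := by
    intro i hi h
    exact hk (pow_eq_zero_of_le hi h)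
  have hstrict : ∀ i, N ^ i ≠ 0 →
      finrank K (LinearMap.range (N ^ (i + 1))) < finrank K (LinearMap.range (N ^ i)) := by
    intro i hi
    apply Submodule.finrank_lt_finrank_of_lt
    refine lt_of_le_of_ne ?_ ?_
    · rw [pow_succ]
      exact LinearMap.range_comp_le_range _ _
    · intro heq'
      have heq : LinearMap.range (N ^ i) = LinearMap.range (N ^ (i + 1)) := heq'.symm
      have hmap : (LinearMap.range (N ^ i)).map N = LinearMap.range (N ^ i) := by
        rw [← LinearMap.range_comp, ← Module.End.mul_eq_comp, ← pow_succ']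
        exact heq'
      have := map_self_eq_bot N m hm hmap
      exact hi (LinearMap.range_eq_bot.mp this)
  have main : ∀ j, j ≤ k → j ≤ finrank K (LinearMap.range (N ^ (k + 1 - j))) := by
    intro j
    induction j with
    | zero => intro _; exact Nat.zero_le _
    | succ j ih =>
      intro hj
      have hj' : j ≤ k := le_of_lt hj
      have h1 : k + 1 - j = (k - j) + 1 := by omega
      have h2 : k + 1 - (j + 1) = k - j := by omega
      have := ih hj'
      rw [h1] at this
      have hlt := hstrict (k - j) (hne _ (Nat.sub_le _ _))
      rw [h2]
      omega
  have h := main k le_rfl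
  have hk1 : k + 1 - k = 1 := by omega
  rw [hk1, pow_one] at h
  exact h

end RankLemma

section Shift

variable (K : Type) [Field K]

/-- The nilpotent shift map on `Fin n → K`. -/
def shiftLM (n : ℕ) : (Fin n → K) →ₗ[K] (Fin n → K) where
  toFun v i := if h : (i : ℕ) + 1 < n then v ⟨(i : ℕ) + 1, h⟩ else 0
  map_add' u v := by
    funext i
    simp only [Pi.add_apply]
    by_cases h : (i : ℕ) + 1 < n <;> simp [h]
  map_smul' c v := by
    funext i
    simp only [Pi.smul_apply, RingHom.id_apply]
    by_cases h : (i : ℕ) + 1 < n <;> simp [h]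

lemma shiftLM_apply (n : ℕ) (v : Fin n → K) (i : Fin n) :
    shiftLM K n v i = if h : (i : ℕ) + 1 < n then v ⟨(i : ℕ) + 1, h⟩ else 0 := rfl

lemma shiftLM_pow (n k : ℕ) (v : Fin n → K) (i : Fin n) :
    ((shiftLM K n ^ k) v) i = if h : (i : ℕ) + k < n then v ⟨(i : ℕ) + k, h⟩ else 0 := by
  induction k generalizing v with
  | zero => simp
  | succ k ih =>
    rw [pow_succ, Module.End.mul_apply, ih (shiftLM K n v)]
    by_cases h : (i : ℕ) + (k + 1) < n
    · rw [dif_pos (by omega : (i : ℕ) + k < n), dif_pos h, shiftLM_apply,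
        dif_pos (by simpa using (by omega : (i : ℕ) + k + 1 < n))]
      congr 1
    · by_cases h' : (i : ℕ) + k < n
      · rw [dif_pos h', dif_neg h, shiftLM_apply, dif_neg (by simpa using (by omega : ¬ ((i : ℕ) + k + 1 < n)))]
      · rw [dif_neg h', dif_neg h]

lemma shiftLM_pow_self (n : ℕ) : shiftLM K n ^ n = 0 := by
  apply LinearMap.ext
  intro v
  funext i
  rw [shiftLM_pow, dif_neg (by omega)]
  simp

lemma shiftLM_pow_pred (m : ℕ) : shiftLM K (m + 1) ^ m ≠ 0 := by
  intro h
  have h2 : (shiftLM K (m + 1) ^ m) (fun _ => (1 : K)) ⟨0, Nat.succ_pos m⟩ = 0 := by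
    rw [h]; simp
  rw [shiftLM_pow] at h2
  simp at h2

lemma shiftLM_range (m : ℕ) :
    LinearMap.range (shiftLM K (m + 1)) =
      LinearMap.ker (LinearMap.proj (R := K) (φ := fun _ : Fin (m + 1) => K) (Fin.last m)) := by
  ext w
  constructor
  · rintro ⟨v, rfl⟩
    rw [LinearMap.mem_ker, LinearMap.proj_apply, shiftLM_apply, dif_neg (by rw [Fin.val_last]; omega)]
  · intro hw
    refine ⟨fun j => if h : (j : ℕ) = 0 then 0 else w ⟨(j : ℕ) - 1, by omega⟩, ?_⟩
    funext i
    rw [shiftLM_apply]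
    by_cases h : (i : ℕ) + 1 < m + 1
    · rw [dif_pos h, dif_neg (by simp)]
      congr 1
    · rw [dif_neg h]
      have hi : i = Fin.last m := by
        ext
        simp only [Fin.last]
        omega
      rw [hi]
      exact (LinearMap.mem_ker.mp hw).symm

lemma finrank_ker_proj_last (m : ℕ) :
    finrank K (LinearMap.ker (LinearMap.proj (R := K) (φ := fun _ : Fin (m + 1) => K)
      (Fin.last m))) = m := by
  have h := LinearMap.finrank_range_add_finrank_ker
    (LinearMap.proj (R := K) (φ := fun _ : Fin (m + 1) => K) (Fin.last m))
  have hs : LinearMap.range (LinearMap.proj (R := K) (φ := fun _ : Fin (m + 1) => K)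
      (Fin.last m)) = ⊤ :=
    LinearMap.range_eq_top.mpr fun c => ⟨fun _ => c, rfl⟩
  rw [hs, finrank_top, Module.finrank_self, Module.finrank_pi, Fintype.card_fin] at h
  omega

end Shift

/-- `μ*(p^a, p) = p^(a-1)`: every linear automorphism of a finite-dimensional
`𝔽_p`-vector space of order exactly `p^a` satisfies `rank (x - id) ≥ p^(a-1)`,
and this bound is attained. -/
theorem mustar_prime_power (p : ℕ) [Fact p.Prime] (a : ℕ) (ha : 1 ≤ a) :
    (∀ (V : Type) [AddCommGroup V] [Module (ZMod p) V] [FiniteDimensional (ZMod p) V]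
      (x : V ≃ₗ[ZMod p] V), orderOf x = p ^ a →
        p ^ (a - 1) ≤ finrank (ZMod p) (LinearMap.range ((x : V →ₗ[ZMod p] V) - LinearMap.id))) ∧
    (∃ (n : ℕ) (x : (Fin n → ZMod p) ≃ₗ[ZMod p] (Fin n → ZMod p)),
      orderOf x = p ^ a ∧
      finrank (ZMod p) (LinearMap.range
        ((x : (Fin n → ZMod p) →ₗ[ZMod p] (Fin n → ZMod p)) - LinearMap.id)) = p ^ (a - 1)) := by
  have hp : p.Prime := Fact.out
  have hpow_lt : p ^ (a - 1) < p ^ a := by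
    apply Nat.pow_lt_pow_right hp.one_lt
    omega
  constructor
  · -- lower bound
    intro V _ _ _ x hx
    haveI : Nontrivial V := by
      by_contra h
      rw [not_nontrivial_iff_subsingleton] at h
      have hx1 : x = 1 := by
        apply LinearEquiv.ext
        intro v
        exact Subsingleton.elim _ _
      rw [hx1, orderOf_one] at hx
      have := hp.one_lt
      have : 1 < p ^ a := Nat.one_lt_pow (by omega) hp.one_lt
      omega
    haveI : CharP (Module.End (ZMod p) V) p :=
      charP_of_injective_algebraMap
        (algebraMap (ZMod p) (Module.End (ZMod p) V)).injective p
    set c : (V ≃ₗ[ZMod p] V) →* (V →ₗ[ZMod p] V) :=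
      LinearEquiv.automorphismGroup.toLinearMapMonoidHom with hc
    have hcinj : Function.Injective c := fun a b h => by
      apply LinearEquiv.toLinearMap_injective h
    set f : V →ₗ[ZMod p] V := (x : V →ₗ[ZMod p] V) with hf
    have hfa : f ^ (p ^ a) = 1 := by
      have h1 : x ^ (p ^ a) = 1 := by rw [← hx]; exact pow_orderOf_eq_one x
      calc f ^ (p ^ a) = c (x ^ (p ^ a)) := (map_pow c x _).symm
        _ = c 1 := by rw [h1]
        _ = 1 := map_one c
    have hN : (f - 1) ^ (p ^ a) = 0 := by
      rw [sub_pow_char_pow_of_commute p a (Commute.one_right f), hfa, one_pow, sub_self]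
    have hNk : (f - 1) ^ (p ^ (a - 1)) ≠ 0 := by
      intro h
      rw [sub_pow_char_pow_of_commute p (a-1) (Commute.one_right f), one_pow, sub_eq_zero] at h
      have hx1 : x ^ (p ^ (a - 1)) = 1 := by
        apply hcinj
        rw [map_pow, map_one]
        exact h
      have hdvd := orderOf_dvd_of_pow_eq_one hx1
      rw [hx] at hdvd
      have := Nat.le_of_dvd (Nat.pow_pos hp.pos) hdvd
      omega
    have hid : (x : V →ₗ[ZMod p] V) - LinearMap.id = f - 1 := by
      rw [hf, Module.End.one_eq_id]
    rw [hid]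
    exact rank_ge_of_pow_ne_zero (f - 1) (p ^ a) (p ^ (a - 1)) hN hNk
  · -- existence
    set m := p ^ (a - 1) with hmdef
    set N : (Fin (m + 1) → ZMod p) →ₗ[ZMod p] (Fin (m + 1) → ZMod p) :=
      shiftLM (ZMod p) (m + 1) with hNdef
    have hNn : N ^ (m + 1) = 0 := shiftLM_pow_self (ZMod p) (m + 1)
    have hNm : N ^ m ≠ 0 := shiftLM_pow_pred (ZMod p) m
    haveI : CharP (Module.End (ZMod p) (Fin (m + 1) → ZMod p)) p :=
      charP_of_injective_algebraMap
        (algebraMap (ZMod p) (Module.End (ZMod p) (Fin (m + 1) → ZMod p))).injective p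
    set u : Module.End (ZMod p) (Fin (m + 1) → ZMod p) := 1 + N with hudef
    have hNpa : N ^ (p ^ a) = 0 := pow_eq_zero_of_le (by omega) hNn
    have hu1 : u ^ (p ^ a) = 1 := by
      rw [hudef, add_pow_char_pow_of_commute p a (Commute.one_left N), one_pow, hNpa, add_zero]
    have hu2 : u ^ (p ^ (a - 1)) ≠ 1 := by
      rw [hudef, add_pow_char_pow_of_commute p (a - 1) (Commute.one_left N), one_pow]
      intro hcon
      exact hNm (by rwa [add_eq_left] at hcon)
    have hsucc : p ^ a - 1 + 1 = p ^ a := Nat.succ_pred_eq_of_pos (Nat.pow_pos hp.pos)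
    have h1 : u ∘ₗ u ^ (p ^ a - 1) = LinearMap.id := by
      rw [← Module.End.mul_eq_comp, ← pow_succ', hsucc, hu1, Module.End.one_eq_id]
    have h2 : (u ^ (p ^ a - 1)) ∘ₗ u = LinearMap.id := by
      rw [← Module.End.mul_eq_comp, ← pow_succ, hsucc, hu1, Module.End.one_eq_id]
    set x : (Fin (m + 1) → ZMod p) ≃ₗ[ZMod p] (Fin (m + 1) → ZMod p) :=
      LinearEquiv.ofLinear u (u ^ (p ^ a - 1)) h1 h2 with hxdef
    have hxcoe : (x : (Fin (m + 1) → ZMod p) →ₗ[ZMod p] (Fin (m + 1) → ZMod p)) = u := rfl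
    set c : ((Fin (m + 1) → ZMod p) ≃ₗ[ZMod p] (Fin (m + 1) → ZMod p)) →*
        ((Fin (m + 1) → ZMod p) →ₗ[ZMod p] (Fin (m + 1) → ZMod p)) :=
      LinearEquiv.automorphismGroup.toLinearMapMonoidHom with hcdef
    have hcx : c x = u := rfl
    have hcinj : Function.Injective c := fun e₁ e₂ h => LinearEquiv.toLinearMap_injective h
    have hxa : x ^ (p ^ a) = 1 := by
      apply hcinj
      rw [map_pow, map_one, hcx, hu1]
    have hxm : x ^ (p ^ (a - 1)) ≠ 1 := by
      intro hcon
      apply hu2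
      have := congrArg c hcon
      rwa [map_pow, map_one, hcx] at this
    have horder : orderOf x = p ^ a := by
      have hdvd := orderOf_dvd_of_pow_eq_one hxa
      obtain ⟨b, hb, hbo⟩ := (Nat.dvd_prime_pow hp).mp hdvd
      rcases eq_or_lt_of_le hb with h | h
      · rw [hbo, h]
      · exfalso
        apply hxm
        apply orderOf_dvd_iff_pow_eq_one.mp
        rw [hbo]
        exact pow_dvd_pow p (by omega)
    have hrange : (x : (Fin (m + 1) → ZMod p) →ₗ[ZMod p] (Fin (m + 1) → ZMod p))
        - LinearMap.id = N := by
      rw [hxcoe, hudef, ← Module.End.one_eq_id]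
      exact add_sub_cancel_left 1 N
    refine ⟨m + 1, x, horder, ?_⟩
    rw [hrange, hNdef, shiftLM_range, finrank_ker_proj_last]
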